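/- Let R be a commutative ring and M an R-module, let U be the multiplicative set of non-zerodivisors on M, let T(M) = U⁻¹M, and identify M with its image in T(M). Then Int(R, M) = M[X] (i.e., every polynomial h with coefficients in T(M) satisfying h(r) ∈ M for all r ∈ R has all its coefficients in M) if and only if the R-module T(M)/M is without polynomial torsion, i.e., the only polynomial g with coefficients in T(M)/M satisfying g(r) = 0 for all r ∈ R is g = 0. -/

import Mathlib

/-- The multiplicative set `U` of all non-zerodivisors on the module `M`. -/
def regOnSubmonoid (R M : Type*) [CommRing R] [AddCommGroup M] [Module R M] :
    Submonoid R where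
  carrier := {a : R | ∀ m : M, a • m = 0 → m = 0}
  one_mem' := fun m hm => by simpa using hm
  mul_mem' := by
    intro a b ha hb m hm
    rw [mul_smul] at hm
    exact hb m (ha _ hm)

/-- Let `U = M^reg` and `T(M) = U⁻¹M`.  Then `Int(R, M) = M[X]` (every
polynomial with coefficients in `T(M)` taking values in `M` on `R` has all its
coefficients in `M`) if and only if the `R`-module `T(M)/M` is without polynomial
torsion (the only polynomial with coefficients in `T(M)/M` vanishing identically on `R`
is the zero polynomial). -/
theorem intPoly_module_eq_iff_no_polynomial_torsion (R M : Type*) [CommRing R]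
    [AddCommGroup M] [Module R M] :
    (∀ h : PolynomialModule R (LocalizedModule (regOnSubmonoid R M) M),
        (∀ r : R,
          PolynomialModule.eval r h
            ∈ Set.range ⇑(LocalizedModule.mkLinearMap (regOnSubmonoid R M) M)) →
        ∀ j : ℕ, h.coeff j ∈ Set.range ⇑(LocalizedModule.mkLinearMap (regOnSubmonoid R M) M))
      ↔ (∀ g : PolynomialModule R
            (LocalizedModule (regOnSubmonoid R M) M ⧸
              LinearMap.range (LocalizedModule.mkLinearMap (regOnSubmonoid R M) M)),
          (∀ r : R, PolynomialModule.eval r g = 0) → g = 0) := by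
  set f := LocalizedModule.mkLinearMap (regOnSubmonoid R M) M
  set π := (LinearMap.range f).mkQ
  have key : ∀ (r : R) (h : PolynomialModule R (LocalizedModule (regOnSubmonoid R M) M)),
      PolynomialModule.eval r (PolynomialModule.map R π h) = π (PolynomialModule.eval r h) := by
    intro r h
    simpa using PolynomialModule.eval_map (R' := R) π h r
  constructor
  · intro H g hg
    obtain ⟨h, rfl⟩ : ∃ h, PolynomialModule.map R π h = g := by
      obtain ⟨h, hh⟩ := Finsupp.mapRange_surjective (e := π) (map_zero π)
        (Submodule.mkQ_surjective _) g.coeff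
      exact ⟨PolynomialModule.ofCoeff R h, by rw [← PolynomialModule.coeff_inj, ← hh]; rfl⟩
    have hmap : (PolynomialModule.map R π h :
        PolynomialModule R _) = PolynomialModule.map R π h := rfl
    rw [hmap] at hg ⊢
    have hh : ∀ r : R, PolynomialModule.eval r h ∈ Set.range ⇑f := by
      intro r
      have := hg r
      rw [key] at this
      obtain ⟨y, hy⟩ := (Submodule.Quotient.mk_eq_zero _).mp this
      exact ⟨y, hy⟩
    refine PolynomialModule.coeff_injective <| Finsupp.ext fun j => ?_
    obtain ⟨y, hy⟩ := H h hh j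
    have : π (h.coeff j) = 0 := (Submodule.Quotient.mk_eq_zero _).mpr ⟨y, hy⟩
    exact this
  · intro H h hh j
    have hg : ∀ r : R, PolynomialModule.eval r (PolynomialModule.map R π h) = 0 := by
      intro r
      rw [key]
      obtain ⟨y, hy⟩ := hh r
      exact (Submodule.Quotient.mk_eq_zero _).mpr ⟨y, hy⟩
    have h0 := H _ hg
    have hz : π (h.coeff j) = 0 := by
      have := DFunLike.congr_fun (congrArg PolynomialModule.coeff h0) j
      exact this
    obtain ⟨y, hy⟩ := (Submodule.Quotient.mk_eq_zero _).mp hz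
    exact ⟨y, hy⟩
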